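/- Let δ be a semi-flower automaton with state set Q, alphabet A, and initial-final state q0, and suppose that for every letter b ∈ A the letter map b̄ : Q → Q, q ↦ δ(q,b), is bijective (a permutation SFA). Then there exists a circular permutation f : Q → Q such that for every word x ∈ A* there is k ∈ ℕ with x̄ = f^k; in particular, the transition monoid {x̄ : x ∈ A*} is a cyclic group. -/

import Mathlib

/-- Extension of the transition function `δ : Q → A → Q` to words (lists of letters):
`δ*(q, ε) = q` and `δ*(q, a·w) = δ*(δ(q,a), w)`. -/
def deltaStar {Q A : Type*} (δ : Q → A → Q) : Q → List A → Q
  | q, [] => q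
  | q, a :: w => deltaStar δ (δ q a) w

/-- `δ` (with initial-final state `q0`) is a semi-flower automaton: every state is
accessible and coaccessible, and every cycle passes through `q0` (i.e. for every
nonempty word `w` labelling a cycle at `q`, some prefix of `w` leads from `q` to `q0`). -/
def IsSFA {Q A : Type*} (δ : Q → A → Q) (q0 : Q) : Prop :=
  (∀ q : Q, ∃ w : List A, deltaStar δ q0 w = q) ∧
  (∀ q : Q, ∃ w : List A, deltaStar δ q w = q0) ∧
  (∀ (q : Q) (w : List A), w ≠ [] → deltaStar δ q w = q →
    ∃ u : List A, u <+: w ∧ deltaStar δ q u = q0)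

/-- A map `f : Q → Q` is a circular permutation if it is bijective and for all
`p q : Q` there is `k : ℕ` with `f^[k] p = q`. -/
def IsCircularPerm {Q : Type*} (f : Q → Q) : Prop :=
  Function.Bijective f ∧ ∀ p q : Q, ∃ k : ℕ, f^[k] p = q

/-- The set of branch points going in (bpis): states that are the target of two
distinct transitions. -/
def BPI {Q A : Type*} (δ : Q → A → Q) : Set Q :=
  {q | ∃ pb₁ pb₂ : Q × A, pb₁ ≠ pb₂ ∧ δ pb₁.1 pb₁.2 = q ∧ δ pb₂.1 pb₂.2 = q}


section Aux
variable {Q A : Type*} (δ : Q → A → Q)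

lemma deltaStar_append (q : Q) (w₁ w₂ : List A) :
    deltaStar δ q (w₁ ++ w₂) = deltaStar δ (deltaStar δ q w₁) w₂ := by
  induction w₁ generalizing q with
  | nil => rfl
  | cons a w ih => simp [deltaStar, ih]

lemma deltaStar_replicate (a : A) (q : Q) (k : ℕ) :
    deltaStar δ q (List.replicate k a) = (fun p => δ p a)^[k] q := by
  induction k generalizing q with
  | zero => rfl
  | succ k ih =>
    rw [List.replicate_succ]
    show deltaStar δ (δ q a) (List.replicate k a) = _
    rw [ih, Function.iterate_succ_apply]

lemma exists_pos_iterate_eq [Fintype Q] {f : Q → Q} (hf : Function.Injective f) (q : Q) :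
    ∃ m, 0 < m ∧ f^[m] q = q := by
  obtain ⟨i, j, hij, h⟩ := Finite.exists_ne_map_eq_of_infinite (fun n : ℕ => f^[n] q)
  wlog hlt : i < j generalizing i j
  · exact this j i hij.symm h.symm (by omega)
  refine ⟨j - i, by omega, ?_⟩
  have : f^[i] (f^[j - i] q) = f^[i] q := by
    rw [← Function.iterate_add_apply, show i + (j - i) = j by omega]
    exact h.symm
  exact hf.iterate i this

variable {δ} [Fintype Q] {q0 : Q}

lemma letter_reaches
    (hcyc : ∀ (q : Q) (w : List A), w ≠ [] → deltaStar δ q w = q →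
      ∃ u : List A, u <+: w ∧ deltaStar δ q u = q0)
    {b : A} (hb : Function.Injective (fun q => δ q b)) (q : Q) :
    ∃ k : ℕ, (fun q => δ q b)^[k] q = q0 := by
  obtain ⟨m, hm, hmq⟩ := exists_pos_iterate_eq hb q
  obtain ⟨u, hu, hu0⟩ := hcyc q (List.replicate m b)
    (by intro h; have := congrArg List.length h; simp at this; omega)
    (by rw [deltaStar_replicate]; exact hmq)
  have hub : u = List.replicate u.length b := by
    refine List.eq_replicate_length.mpr fun x hx => ?_
    have := hu.subset hx
    exact List.eq_of_mem_replicate this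
  refine ⟨u.length, ?_⟩
  rw [← deltaStar_replicate, ← hub]; exact hu0

lemma letters_eq
    (hcyc : ∀ (q : Q) (w : List A), w ≠ [] → deltaStar δ q w = q →
      ∃ u : List A, u <+: w ∧ deltaStar δ q u = q0)
    (hperm : ∀ b : A, Function.Bijective (fun q => δ q b)) (a b : A) (q : Q) :
    δ q b = δ q a := by
  classical
  set f : Q → Q := fun q => δ q a with hf
  set g : Q → Q := fun q => δ q b with hg
  have hfb : Function.Bijective f := hperm a
  have hgb : Function.Bijective g := hperm b
  have hreach : ∀ q : Q, ∃ k : ℕ, f^[k] q = q0 := letter_reaches hcyc hfb.injective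
  set ℓ : Q → ℕ := fun q => Nat.find (hreach q) with hℓ
  have hℓ0 : ∀ q, f^[ℓ q] q = q0 := fun q => Nat.find_spec (hreach q)
  have hℓmin : ∀ q k, k < ℓ q → f^[k] q ≠ q0 := fun q k hk => Nat.find_min (hreach q) hk
  have level_inj : ∀ p q : Q, ℓ p = ℓ q → p = q := by
    intro p q h
    have := (hℓ0 p).trans (hℓ0 q).symm
    rw [h] at this
    exact hfb.injective.iterate (ℓ q) this
  have hℓq0 : ℓ q0 = 0 := Nat.find_eq_zero (hreach q0) |>.mpr rfl
  have hstep : ∀ q, 0 < ℓ q → ℓ (f q) = ℓ q - 1 := by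
    intro q hq
    have h1 : ℓ (f q) ≤ ℓ q - 1 := by
      apply Nat.find_le
      rw [← Function.iterate_succ_apply]
      show f^[ℓ q - 1 + 1] q = q0
      have he : ℓ q - 1 + 1 = ℓ q := by omega
      rw [he]
      exact hℓ0 q
    have h2 : ¬ ℓ (f q) < ℓ q - 1 := by
      intro h
      have := hℓmin q (ℓ (f q) + 1) (by omega)
      rw [Function.iterate_succ_apply] at this
      exact this (hℓ0 (f q))
    omega
  have hiter : ∀ (i : ℕ) (q : Q), i ≤ ℓ q → ℓ (f^[i] q) = ℓ q - i := by
    intro i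
    induction i with
    | zero => intro q _; simp
    | succ i ih =>
      intro q hi
      rw [Function.iterate_succ_apply', hstep _ (by rw [ih q (by omega)]; omega),
        ih q (by omega)]
      omega
  have key7 : ∀ q : Q, 0 < ℓ q → ℓ (g q) < ℓ q := by
    intro q hq
    by_contra hge
    push_neg at hge
    set m := ℓ (g q) with hm
    have hdw : deltaStar δ q (b :: List.replicate (m - ℓ q) a) = q := by
      show deltaStar δ (g q) _ = q
      rw [deltaStar_replicate]
      apply level_inj
      rw [hiter _ _ (by omega)]
      omega
    obtain ⟨u, hu, hu0⟩ := hcyc q _ (List.cons_ne_nil _ _) hdw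
    rcases u with _ | ⟨c, u'⟩
    · exact hℓmin q 0 hq hu0
    · rw [List.cons_prefix_cons] at hu
      obtain ⟨hc, hu'⟩ := hu
      have hub : u' = List.replicate u'.length a := by
        refine List.eq_replicate_length.mpr fun x hx => ?_
        exact List.eq_of_mem_replicate (hu'.subset hx)
      have hlen : u'.length ≤ m - ℓ q := by
        have := hu'.length_le
        simpa using this
      have : deltaStar δ q (c :: u') = f^[u'.length] (g q) := by
        show deltaStar δ (δ q c) u' = _
        rw [hc]
        show deltaStar δ (g q) u' = _
        rw [hub, deltaStar_replicate]
        simp only [List.length_replicate]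
        rfl
      rw [this] at hu0
      exact hℓmin (g q) u'.length (by omega) hu0
  have key8 : ∀ (m : ℕ) (q : Q), 0 < ℓ q → ℓ (g q) = m → m = ℓ q - 1 := by
    intro m
    induction m using Nat.strong_induction_on with
    | _ m ih =>
      intro q hq hm
      by_contra hne
      have hlt : m < ℓ q - 1 := by
        have := key7 q hq
        omega
      obtain ⟨p, hp⟩ : ∃ p, ℓ p = m + 1 := by
        refine ⟨f^[ℓ q - (m + 1)] q, ?_⟩
        rw [hiter _ _ (by omega)]; omega
      have h1 : ℓ (g p) < m + 1 := by
        have := key7 p (by omega)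
        omega
      have h2 : ℓ (g p) ≠ m := by
        intro h
        have hgg : g p = g q := level_inj _ _ (h.trans hm.symm)
        have hpq : p = q := hgb.injective hgg
        rw [hpq] at hp
        omega
      have h3 : ℓ (g p) < m := by omega
      have := ih _ h3 p (by omega) rfl
      omega
  have hagree : ∀ p : Q, 0 < ℓ p → g p = f p := by
    intro p hp
    apply level_inj
    rw [key8 (ℓ (g p)) p hp rfl, hstep p hp]
  show g q = f q
  rcases Nat.eq_zero_or_pos (ℓ q) with hq | hq
  · by_contra hne
    obtain ⟨p, hp⟩ := hfb.surjective (g q)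
    have hpq : p ≠ q := by
      intro h
      rw [h] at hp
      exact hne hp.symm
    have hℓp : 0 < ℓ p := by
      rcases Nat.eq_zero_or_pos (ℓ p) with h | h
      · exact absurd (level_inj p q (by rw [h, hq])) hpq
      · exact h
    have : g p = g q := by rw [hagree p hℓp, hp]
    exact hpq (hgb.injective this)
  · exact hagree q hq

end Aux

/-- In a permutation semi-flower automaton there is a circular permutation `f`
such that every word map is a power of `f`; in particular the transition monoid
is a cyclic group. -/
theorem permutation_sfa_monoid_cyclic {Q A : Type*} [Fintype Q] [Nonempty Q] [Fintype A]
    (δ : Q → A → Q) (q0 : Q) (hSFA : IsSFA δ q0)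
    (hperm : ∀ b : A, Function.Bijective (fun q => δ q b)) :
    ∃ f : Q → Q, IsCircularPerm f ∧
      ∀ x : List A, ∃ k : ℕ, (fun q => deltaStar δ q x) = f^[k] := by
  obtain ⟨hacc, -, hcyc⟩ := hSFA
  rcases isEmpty_or_nonempty A with hA | hA
  · refine ⟨id, ⟨Function.bijective_id, ?_⟩, ?_⟩
    · intro p q
      obtain ⟨wp, hwp⟩ := hacc p
      obtain ⟨wq, hwq⟩ := hacc q
      cases wp with
      | nil =>
        cases wq with
        | nil => exact ⟨0, by rw [← hwp, ← hwq]; rfl⟩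
        | cons c _ => exact isEmptyElim c
      | cons c _ => exact isEmptyElim c
    · intro x
      cases x with
      | nil => exact ⟨0, rfl⟩
      | cons c _ => exact isEmptyElim c
  · obtain ⟨a⟩ := hA
    set f : Q → Q := fun q => δ q a with hf
    have hfb : Function.Bijective f := hperm a
    have hreach : ∀ q : Q, ∃ k : ℕ, f^[k] q = q0 := letter_reaches hcyc hfb.injective
    refine ⟨f, ⟨hfb, ?_⟩, ?_⟩
    · intro p q
      obtain ⟨k₁, hk₁⟩ := hreach p
      obtain ⟨k₂, hk₂⟩ := hreach q
      obtain ⟨m, hm, hmq⟩ := exists_pos_iterate_eq hfb.injective q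
      have hfix : f^[k₂ * m] q = q := by
        rw [mul_comm, Function.iterate_mul]
        exact Function.iterate_fixed hmq k₂
      refine ⟨(k₂ * m - k₂) + k₁, ?_⟩
      rw [Function.iterate_add_apply, hk₁, ← hk₂, ← Function.iterate_add_apply,
        Nat.sub_add_cancel (Nat.le_mul_of_pos_right k₂ hm)]
      exact hfix
    · intro x
      refine ⟨x.length, funext fun q => ?_⟩
      induction x generalizing q with
      | nil => rfl
      | cons c w ih =>
        show deltaStar δ (δ q c) w = f^[w.length + 1] q
        rw [ih (δ q c), letters_eq hcyc hperm a c q, Function.iterate_succ_apply]
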